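/- The kernel of the homomorphism φ : G → ℤ with φ(t) = 1, φ(a) = φ(b) = 0, where G = ⟨a, b, t | t⁻¹at = b, t⁻¹bt = aba⁻¹⟩, has infinite cyclic abelianization. -/

import Mathlib

/-- Generators: `0 = a`, `1 = b`, `2 = t`.  Relations of
`⟨a, b, t | t⁻¹at = b, t⁻¹bt = aba⁻¹⟩`. -/
def grels : Set (FreeGroup (Fin 3)) :=
  {(FreeGroup.of 2)⁻¹ * FreeGroup.of 0 * FreeGroup.of 2 * (FreeGroup.of 1)⁻¹,
   (FreeGroup.of 2)⁻¹ * FreeGroup.of 1 * FreeGroup.of 2 *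
     (FreeGroup.of 0 * FreeGroup.of 1 * (FreeGroup.of 0)⁻¹)⁻¹}

namespace Stmt8Aux

abbrev G := PresentedGroup grels

noncomputable def a : G := PresentedGroup.of 0
noncomputable def b : G := PresentedGroup.of 1
noncomputable def t : G := PresentedGroup.of 2

lemma rel1 : t⁻¹ * a * t = b := by
  have h : PresentedGroup.mk grels ((FreeGroup.of 2)⁻¹ * FreeGroup.of 0 * FreeGroup.of 2 * (FreeGroup.of 1)⁻¹) = 1 := by
    change QuotientGroup.mk _ = 1
    refine (QuotientGroup.eq_one_iff _).mpr ?_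
    exact Subgroup.subset_normalClosure (Set.mem_insert _ _)
  simp only [map_mul, map_inv] at h
  have := mul_eq_one_iff_eq_inv.mp h
  simpa [a, b, t, PresentedGroup.of] using this

lemma rel2 : t⁻¹ * b * t = a * b * a⁻¹ := by
  have h : PresentedGroup.mk grels ((FreeGroup.of 2)⁻¹ * FreeGroup.of 1 * FreeGroup.of 2 *
     (FreeGroup.of 0 * FreeGroup.of 1 * (FreeGroup.of 0)⁻¹)⁻¹) = 1 := by
    change QuotientGroup.mk _ = 1
    refine (QuotientGroup.eq_one_iff _).mpr ?_
    exact Subgroup.subset_normalClosure (Set.mem_insert_of_mem _ rfl)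
  simp only [map_mul, map_inv] at h
  have := mul_eq_one_iff_eq_inv.mp h
  simpa [a, b, t, PresentedGroup.of] using this

lemma a_eq : a = t * b * t⁻¹ := by rw [← rel1]; group

lemma b_eq : b = t * (a * b * a⁻¹) * t⁻¹ := by rw [← rel2]; group

noncomputable def c (n : ℤ) : G := t ^ n * a * t ^ (-n)
noncomputable def d (n : ℤ) : G := t ^ n * b * t ^ (-n)

lemma c_zero : c 0 = a := by simp [c]
lemma d_zero : d 0 = b := by simp [d]

lemma c_eq (n : ℤ) : c n = d (n + 1) := by
  rw [c, d, a_eq]; group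

lemma d_eq (n : ℤ) : d n = c (n + 1) * d (n + 1) * (c (n + 1))⁻¹ := by
  rw [d, c, d]
  nth_rewrite 1 [b_eq]
  group

lemma conj_c (n : ℤ) : t * c n * t⁻¹ = c (n + 1) := by rw [c, c]; group
lemma conj_d (n : ℤ) : t * d n * t⁻¹ = d (n + 1) := by rw [d, d]; group
lemma conj_c' (n : ℤ) : t⁻¹ * c n * t = c (n - 1) := by rw [c, c]; group
lemma conj_d' (n : ℤ) : t⁻¹ * d n * t = d (n - 1) := by rw [d, d]; group

noncomputable def T : Set G := Set.range c ∪ Set.range d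

noncomputable def S : Subgroup G := Subgroup.closure T

lemma a_mem_S : a ∈ S := Subgroup.subset_closure (Or.inl ⟨0, c_zero⟩)
lemma b_mem_S : b ∈ S := Subgroup.subset_closure (Or.inr ⟨0, d_zero⟩)

lemma conj_mem_S : ∀ x ∈ S, t * x * t⁻¹ ∈ S := by
  intro x hx
  induction hx using Subgroup.closure_induction with
  | mem y hy =>
    rcases hy with ⟨n, rfl⟩ | ⟨n, rfl⟩
    · rw [conj_c]; exact Subgroup.subset_closure (Or.inl ⟨n + 1, rfl⟩)
    · rw [conj_d]; exact Subgroup.subset_closure (Or.inr ⟨n + 1, rfl⟩)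
  | one => simpa using one_mem S
  | mul y z _ _ hy hz =>
    have : t * (y * z) * t⁻¹ = (t * y * t⁻¹) * (t * z * t⁻¹) := by group
    rw [this]; exact mul_mem hy hz
  | inv y _ hy =>
    have : t * y⁻¹ * t⁻¹ = (t * y * t⁻¹)⁻¹ := by group
    rw [this]; exact inv_mem hy

lemma conj_mem_S' : ∀ x ∈ S, t⁻¹ * x * t ∈ S := by
  intro x hx
  induction hx using Subgroup.closure_induction with
  | mem y hy =>
    rcases hy with ⟨n, rfl⟩ | ⟨n, rfl⟩
    · rw [conj_c']; exact Subgroup.subset_closure (Or.inl ⟨n - 1, rfl⟩)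
    · rw [conj_d']; exact Subgroup.subset_closure (Or.inr ⟨n - 1, rfl⟩)
  | one => simpa using one_mem S
  | mul y z _ _ hy hz =>
    have : t⁻¹ * (y * z) * t = (t⁻¹ * y * t) * (t⁻¹ * z * t) := by group
    rw [this]; exact mul_mem hy hz
  | inv y _ hy =>
    have : t⁻¹ * y⁻¹ * t = (t⁻¹ * y * t)⁻¹ := by group
    rw [this]; exact inv_mem hy

lemma t_mem_normalizer : t ∈ Subgroup.normalizer (S : Set G) := by
  rw [Subgroup.mem_normalizer_iff]
  intro h
  constructor
  · exact conj_mem_S h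
  · intro hh
    have := conj_mem_S' _ hh
    have e : t⁻¹ * (t * h * t⁻¹) * t = h := by group
    rwa [e] at this

lemma S_normal : S.Normal := by
  rw [← Subgroup.normalizer_eq_top_iff]
  rw [eq_top_iff, ← PresentedGroup.closure_range_of grels, Subgroup.closure_le]
  rintro _ ⟨i, rfl⟩
  fin_cases i
  · exact Subgroup.le_normalizer a_mem_S
  · exact Subgroup.le_normalizer b_mem_S
  · exact t_mem_normalizer

end Stmt8Aux
namespace Stmt8Aux
section
variable (φ : PresentedGroup grels →* Multiplicative ℤ)
    (ht : φ (PresentedGroup.of 2) = Multiplicative.ofAdd 1)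
    (ha : φ (PresentedGroup.of 0) = 1) (hb : φ (PresentedGroup.of 1) = 1)

include ht ha hb

lemma φT : ∀ g ∈ T, φ g = 1 := by
  rintro g (⟨n, rfl⟩ | ⟨n, rfl⟩) <;>
    simp [c, d, map_mul, map_zpow, Stmt8Aux.a, Stmt8Aux.b, Stmt8Aux.t, ha, hb] <;> group

lemma S_le_K : S ≤ φ.ker := (Subgroup.closure_le _).mpr (fun g hg => φT φ ht ha hb g hg)

lemma K_le_S : φ.ker ≤ S := by
  haveI := S_normal
  set π := QuotientGroup.mk' S with hπ
  have hgen : ∀ g : G, π g ∈ Subgroup.zpowers (π t) := by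
    have h : (⊤ : Subgroup G) ≤ (Subgroup.zpowers (π t)).comap π := by
      rw [← PresentedGroup.closure_range_of grels, Subgroup.closure_le]
      rintro _ ⟨i, rfl⟩
      fin_cases i
      · have h1 : π a = 1 := (QuotientGroup.eq_one_iff _).mpr a_mem_S
        show π a ∈ Subgroup.zpowers (π t)
        rw [h1]; exact one_mem _
      · have h1 : π b = 1 := (QuotientGroup.eq_one_iff _).mpr b_mem_S
        show π b ∈ Subgroup.zpowers (π t)
        rw [h1]; exact one_mem _
      · show π t ∈ Subgroup.zpowers (π t)
        exact Subgroup.mem_zpowers _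
    intro g
    exact h (Subgroup.mem_top g)
  intro g hg
  obtain ⟨n, hn⟩ := hgen g
  have hn' : (QuotientGroup.mk (t ^ n) : G ⧸ S) = QuotientGroup.mk g := by
    show π (t ^ n) = π g
    rw [map_zpow]; exact hn
  have hmem : (t ^ n)⁻¹ * g ∈ S := QuotientGroup.eq.mp hn'
  have hφ : φ ((t ^ n)⁻¹ * g) = 1 := S_le_K φ ht ha hb hmem
  rw [map_mul, map_inv, map_zpow] at hφ
  rw [MonoidHom.mem_ker] at hg
  rw [hg, mul_one, show Stmt8Aux.t = PresentedGroup.of 2 from rfl, ht] at hφ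
  have hn0 : n = 0 := by
    have := congrArg Multiplicative.toAdd hφ
    simpa using this
  subst hn0
  simpa using hmem

end
end Stmt8Aux

namespace Stmt8Aux

noncomputable def σf : Fin 3 → Multiplicative ℤ :=
  fun i => if i = 2 then 1 else Multiplicative.ofAdd 1

lemma σrels : ∀ r ∈ grels, FreeGroup.lift σf r = 1 := by
  intro r hr
  rcases hr with h | h <;> subst h <;> simp [σf, FreeGroup.lift_apply_of]

noncomputable def σ : G →* Multiplicative ℤ := PresentedGroup.toGroup σrels

lemma σa : σ a = Multiplicative.ofAdd 1 := by rw [a, σ, PresentedGroup.toGroup.of]; rfl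
lemma σb : σ b = Multiplicative.ofAdd 1 := by rw [b, σ, PresentedGroup.toGroup.of]; rfl
lemma σt : σ t = 1 := by rw [t, σ, PresentedGroup.toGroup.of]; rfl

lemma σT : ∀ g ∈ T, σ g = Multiplicative.ofAdd 1 := by
  rintro g (⟨n, rfl⟩ | ⟨n, rfl⟩) <;>
    simp [c, d, map_mul, map_zpow, σa, σb, σt]

section
variable (φ : PresentedGroup grels →* Multiplicative ℤ)
    (ht : φ (PresentedGroup.of 2) = Multiplicative.ofAdd 1)
    (ha : φ (PresentedGroup.of 0) = 1) (hb : φ (PresentedGroup.of 1) = 1)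

include ht ha hb

lemma T_sub_K : T ⊆ (φ.ker : Set G) := fun g hg => φT φ ht ha hb g hg

lemma a_mem_K : a ∈ φ.ker := S_le_K φ ht ha hb a_mem_S

noncomputable def A : Abelianization φ.ker :=
  Abelianization.of (⟨a, a_mem_K φ ht ha hb⟩ : φ.ker)

lemma cK (n : ℤ) : c n ∈ φ.ker := S_le_K φ ht ha hb (Subgroup.subset_closure (Or.inl ⟨n, rfl⟩))
lemma dK (n : ℤ) : d n ∈ φ.ker := S_le_K φ ht ha hb (Subgroup.subset_closure (Or.inr ⟨n, rfl⟩))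

lemma abD_step (n : ℤ) :
    Abelianization.of (⟨d n, dK φ ht ha hb n⟩ : φ.ker)
      = Abelianization.of (⟨d (n + 1), dK φ ht ha hb (n + 1)⟩ : φ.ker) := by
  have h : (⟨d n, dK φ ht ha hb n⟩ : φ.ker)
      = ⟨c (n + 1), cK φ ht ha hb (n + 1)⟩ * ⟨d (n + 1), dK φ ht ha hb (n + 1)⟩
        * (⟨c (n + 1), cK φ ht ha hb (n + 1)⟩)⁻¹ := by
    apply Subtype.ext
    push_cast
    exact d_eq n
  rw [h, map_mul, map_mul, map_inv, mul_right_comm, mul_inv_cancel, one_mul]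

lemma abD (n : ℤ) :
    Abelianization.of (⟨d n, dK φ ht ha hb n⟩ : φ.ker)
      = Abelianization.of (⟨d 0, dK φ ht ha hb 0⟩ : φ.ker) := by
  induction n using Int.induction_on with
  | zero => rfl
  | succ k ih => rw [← abD_step φ ht ha hb (k:ℤ)]; exact ih
  | pred k ih =>
    have h := abD_step φ ht ha hb (-(k:ℤ) - 1)
    rw [show (-(k:ℤ) - 1) + 1 = -(k:ℤ) by ring] at h
    rw [h]; exact ih

lemma abT : ∀ g (hg : g ∈ T),
    Abelianization.of (⟨g, T_sub_K φ ht ha hb hg⟩ : φ.ker) = A φ ht ha hb := by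
  have hA : A φ ht ha hb = Abelianization.of (⟨d 0, dK φ ht ha hb 0⟩ : φ.ker) := by
    rw [A]
    have h1 : (⟨a, a_mem_K φ ht ha hb⟩ : φ.ker) = ⟨c 0, cK φ ht ha hb 0⟩ := by
      apply Subtype.ext; exact c_zero.symm
    rw [h1]
    have h2 : (⟨c 0, cK φ ht ha hb 0⟩ : φ.ker) = ⟨d 1, dK φ ht ha hb 1⟩ := by
      apply Subtype.ext; exact c_eq 0
    rw [h2]
    exact abD φ ht ha hb 1
  rintro g (⟨n, rfl⟩ | ⟨n, rfl⟩)
  · have h2 : (⟨c n, T_sub_K φ ht ha hb (Or.inl ⟨n, rfl⟩)⟩ : φ.ker) = ⟨d (n+1), dK φ ht ha hb (n+1)⟩ := by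
      apply Subtype.ext; exact c_eq n
    rw [h2, abD φ ht ha hb (n+1), hA]
  · rw [show (⟨d n, T_sub_K φ ht ha hb (Or.inr ⟨n, rfl⟩)⟩ : φ.ker) = ⟨d n, dK φ ht ha hb n⟩ from rfl,
      abD φ ht ha hb n, hA]

lemma abMain : ∀ g (hg : g ∈ φ.ker),
    Abelianization.of (⟨g, hg⟩ : φ.ker)
      = A φ ht ha hb ^ (Multiplicative.toAdd (σ g)) := by
  have key : ∀ g (hg : g ∈ Subgroup.closure T),
      Abelianization.of (⟨g, S_le_K φ ht ha hb hg⟩ : φ.ker)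
        = A φ ht ha hb ^ (Multiplicative.toAdd (σ g)) := by
    intro g hg
    induction hg using Subgroup.closure_induction with
    | mem x hx =>
      rw [σT x hx]
      simpa using abT φ ht ha hb x hx
    | one =>
      show Abelianization.of (1 : φ.ker) = _
      simp
    | mul x y hx hy ihx ihy =>
      have h : (⟨x * y, S_le_K φ ht ha hb (mul_mem hx hy)⟩ : φ.ker)
          = ⟨x, S_le_K φ ht ha hb hx⟩ * ⟨y, S_le_K φ ht ha hb hy⟩ := rfl
      rw [h, map_mul, ihx, ihy, map_mul, ← zpow_add]
      rfl
    | inv x hx ihx =>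
      have h : (⟨x⁻¹, S_le_K φ ht ha hb (inv_mem hx)⟩ : φ.ker)
          = (⟨x, S_le_K φ ht ha hb hx⟩)⁻¹ := rfl
      rw [h, map_inv, ihx, ← zpow_neg, map_inv]
      rfl
  intro g hg
  exact key g (K_le_S φ ht ha hb hg)

end
end Stmt8Aux

theorem stmt_8 (φ : PresentedGroup grels →* Multiplicative ℤ)
    (ht : φ (PresentedGroup.of 2) = Multiplicative.ofAdd 1)
    (ha : φ (PresentedGroup.of 0) = 1) (hb : φ (PresentedGroup.of 1) = 1) :
    Nonempty (Abelianization φ.ker ≃* Multiplicative ℤ) := by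
  classical
  set A := Stmt8Aux.A φ ht ha hb with hA
  let θ : Abelianization φ.ker →* Multiplicative ℤ :=
    Abelianization.lift (Stmt8Aux.σ.comp φ.ker.subtype)
  let ι : Multiplicative ℤ →* Abelianization φ.ker := zpowersHom _ A
  have h1 : ι.comp θ = MonoidHom.id _ := by
    apply Abelianization.hom_ext
    ext k
    obtain ⟨g, hg⟩ := k
    simp only [MonoidHom.comp_apply, MonoidHom.id_apply, Abelianization.lift_apply_of]
    show ι (Stmt8Aux.σ g) = Abelianization.of (⟨g, hg⟩ : φ.ker)
    rw [Stmt8Aux.abMain φ ht ha hb g hg]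
    simp [ι, zpowersHom_apply, hA]
  have h2 : θ.comp ι = MonoidHom.id _ := by
    apply MonoidHom.ext_mint
    show θ (A ^ Multiplicative.toAdd (Multiplicative.ofAdd (1:ℤ))) = Multiplicative.ofAdd 1
    rw [toAdd_ofAdd, zpow_one, hA, Stmt8Aux.A]
    show Stmt8Aux.σ Stmt8Aux.a = Multiplicative.ofAdd 1
    exact Stmt8Aux.σa
  exact ⟨θ.toMulEquiv ι h1 h2⟩
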